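/- Let q ≥ 2 be an even integer and set N = q³ − 1, M = q² + q + 1. Let S be the set of residues i with 1 ≤ i ≤ N − 1 and M ∤ i. Then S has exactly q³ − q elements, S is stable under multiplication by −1 and by q modulo N, the group {±1, ±q, ±q²} ⊆ (ℤ/Nℤ)× has order 6 and acts on S with all orbits of size exactly 6, and hence the number of orbits equals q(q² − 1)/6. -/

import Mathlib

/-- The set of residues modulo `q³ - 1` not divisible by `q² + q + 1`. -/
def stmt7S (q : ℕ) : Set (ZMod (q ^ 3 - 1)) :=
  {x | ¬ (q ^ 2 + q + 1) ∣ x.val}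

/-- The subgroup `{±1, ±q, ±q²}` of units modulo `q³ - 1`, as a finset of residues. -/
def stmt7H (q : ℕ) : Finset (ZMod (q ^ 3 - 1)) :=
  {1, -1, (q : ZMod (q ^ 3 - 1)), -(q : ZMod (q ^ 3 - 1)),
    (q : ZMod (q ^ 3 - 1)) ^ 2, -((q : ZMod (q ^ 3 - 1)) ^ 2)}

namespace Stmt7Aux

lemma hMN {q : ℕ} (hq : 2 ≤ q) : (q^2+q+1) * (q-1) = q^3 - 1 := by
  refine eq_tsub_of_add_eq ?_
  obtain ⟨p, rfl⟩ := Nat.exists_eq_add_of_le hq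
  have h1 : 2 + p - 1 = p + 1 := by omega
  rw [h1]; ring

lemma hsq {q : ℕ} (hq : 1 ≤ q) : (q-1)*(q+1) = q^2 - 1 := by
  refine eq_tsub_of_add_eq ?_
  obtain ⟨p, rfl⟩ := Nat.exists_eq_add_of_le hq
  have h1 : 1 + p - 1 = p := by omega
  rw [h1]; ring

lemma hN8 {q : ℕ} (hq : 2 ≤ q) : 8 ≤ q^3 :=
  calc (8:ℕ) = 2^3 := by norm_num
  _ ≤ q^3 := Nat.pow_le_pow_left hq 3

lemma bounds {q : ℕ} (hq : 2 ≤ q) : 2*q ≤ q^2 ∧ q^2 + 3 ≤ q^3 ∧ 4 ≤ q^2 := by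
  have h2 : q^2 = q*q := by ring
  have h3 : q^3 = q*q*q := by ring
  have b1 : 2*q ≤ q*q := Nat.mul_le_mul_right q hq
  have b2 : 2*(q*q) ≤ q*(q*q) := Nat.mul_le_mul_right (q*q) hq
  have b3 : 4 ≤ q*q := by nlinarith
  constructor
  · omega
  constructor
  · rw [h2, h3]; nlinarith
  · omega

lemma parity {q : ℕ} (hq : 2 ≤ q) (hqe : Even q) :
    q % 2 = 0 ∧ q^2 % 2 = 0 ∧ (q^3 - 1) % 2 = 1 := by
  obtain ⟨c, rfl⟩ := hqe
  have h2 : (c+c)^2 = 2*(2*c*c) := by ring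
  have h3 : (c+c)^3 = 2*(4*c*c*c) := by ring
  have := hN8 hq
  omega

lemma cop_M_q {q : ℕ} : Nat.Coprime (q^2+q+1) q := by
  have h := (Nat.coprime_add_mul_left_left 1 q (q+1)).mpr (Nat.coprime_one_left q)
  have e : 1 + q*(q+1) = q^2+q+1 := by ring
  rwa [e] at h

lemma cop_M_q1 {q : ℕ} : Nat.Coprime (q^2+q+1) (q+1) := by
  have h := (Nat.coprime_add_mul_left_left 1 (q+1) q).mpr (Nat.coprime_one_left (q+1))
  have e : 1 + (q+1)*q = q^2+q+1 := by ring
  rwa [e] at h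

lemma cop_N_2 {q : ℕ} (hq : 2 ≤ q) (hqe : Even q) : Nat.Coprime (q^3-1) 2 := by
  have hp := (parity hq hqe).2.2
  exact Nat.coprime_comm.mp ((Nat.Prime.coprime_iff_not_dvd Nat.prime_two).mpr (by omega))

lemma cop_N_q1 {q : ℕ} (hq : 2 ≤ q) (hqe : Even q) : Nat.Coprime (q^3-1) (q+1) := by
  set d := Nat.gcd (q^3-1) (q+1) with hd
  have hd1 : d ∣ q^3 - 1 := Nat.gcd_dvd_left _ _
  have hd2 : d ∣ q + 1 := Nat.gcd_dvd_right _ _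
  have h1 : d ∣ (q+1)*q^2 := hd2.mul_right _
  have e1 : (q+1)*q^2 = q^3 + q^2 := by ring
  rw [e1] at h1
  have h2 : d ∣ (q^3 + q^2) - (q^3 - 1) := Nat.dvd_sub h1 hd1
  have e2 : (q^3 + q^2) - (q^3 - 1) = q^2 + 1 := by have := hN8 hq; omega
  rw [e2] at h2
  have h3 : d ∣ (q+1)*q := hd2.mul_right _
  have e3 : (q+1)*q = q^2 + q := by ring
  rw [e3] at h3
  have h4 : d ∣ (q^2 + q) - (q^2 + 1) := Nat.dvd_sub h3 h2
  have e4 : (q^2+q) - (q^2+1) = q - 1 := by omega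
  rw [e4] at h4
  have h5 : d ∣ (q+1) - (q-1) := Nat.dvd_sub hd2 h4
  have e5 : (q+1) - (q-1) = 2 := by omega
  rw [e5] at h5
  rcases (Nat.dvd_prime Nat.prime_two).mp h5 with h | h
  · exact h
  · exfalso
    rw [h] at hd2
    obtain ⟨c, hc⟩ := hqe
    omega

lemma cop_N_q2 {q : ℕ} (hq : 2 ≤ q) (hqe : Even q) : Nat.Coprime (q^3-1) (q^2+1) := by
  have hd1 : Nat.gcd (q^3-1) (q^2+1) ∣ q^3 - 1 := Nat.gcd_dvd_left _ _
  have hd2 : Nat.gcd (q^3-1) (q^2+1) ∣ q^2 + 1 := Nat.gcd_dvd_right _ _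
  have h1 : Nat.gcd (q^3-1) (q^2+1) ∣ (q^2+1)*q := hd2.mul_right _
  have e1 : (q^2+1)*q = q^3 + q := by ring
  rw [e1] at h1
  have h2 : Nat.gcd (q^3-1) (q^2+1) ∣ (q^3 + q) - (q^3 - 1) := Nat.dvd_sub h1 hd1
  have e2 : (q^3 + q) - (q^3 - 1) = q + 1 := by have := hN8 hq; omega
  rw [e2] at h2
  have := Nat.dvd_gcd hd1 h2
  rw [(cop_N_q1 hq hqe)] at this
  exact Nat.dvd_one.mp this

lemma nzN {q : ℕ} (hq : 2 ≤ q) : NeZero (q^3-1) := ⟨by have := hN8 hq; omega⟩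

lemma M_dvd_N {q : ℕ} (hq : 2 ≤ q) : (q^2+q+1) ∣ (q^3-1) := ⟨q-1, (hMN hq).symm⟩

lemma dvd_neg_iff {q : ℕ} (hq : 2 ≤ q) (x : ZMod (q^3-1)) :
    (q^2+q+1) ∣ (-x).val ↔ (q^2+q+1) ∣ x.val := by
  haveI := nzN hq
  rw [ZMod.neg_val]
  split_ifs with h
  · rw [h, ZMod.val_zero]
  · have hvlt : x.val < q^3-1 := ZMod.val_lt x
    have hMN' := M_dvd_N hq
    constructor
    · intro hd
      have h2 := Nat.dvd_sub hMN' hd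
      have e : (q^3-1) - ((q^3-1) - x.val) = x.val := by omega
      rwa [e] at h2
    · intro hd
      exact Nat.dvd_sub hMN' hd

lemma dvd_q_mul_iff {q : ℕ} (hq : 2 ≤ q) (x : ZMod (q^3-1)) :
    (q^2+q+1) ∣ ((q : ZMod (q^3-1)) * x).val ↔ (q^2+q+1) ∣ x.val := by
  haveI := nzN hq
  have hb := bounds hq
  have h8 := hN8 hq
  have hqlt : q < q^3 - 1 := by omega
  rw [ZMod.val_mul, ZMod.val_cast_of_lt hqlt, Nat.dvd_mod_iff (M_dvd_N hq)]
  exact Nat.Coprime.dvd_mul_left cop_M_q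

lemma free_aux {q : ℕ} (hq : 2 ≤ q) (hqe : Even q) (x : ZMod (q^3-1))
    (hx : ¬ (q^2+q+1) ∣ x.val) :
    ∀ g ∈ stmt7H q, g * x = x → g = 1 := by
  haveI := nzN hq
  have h8 := hN8 hq
  have hv : x.val < q^3 - 1 := ZMod.val_lt x
  have hxc : ((x.val : ℕ) : ZMod (q^3-1)) = x := ZMod.natCast_zmod_val x
  have hzero : ∀ c : ℕ, Nat.Coprime (q^3-1) c → ((q^3-1) ∣ c * x.val) → False := by
    intro c hc hdvd
    have hxv : (q^3-1) ∣ x.val := (hc.dvd_mul_left).mp hdvd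
    have hz : x.val = 0 := Nat.eq_zero_of_dvd_of_lt hxv hv
    exact hx (hz ▸ dvd_zero _)
  intro g hg hgx
  simp only [stmt7H, Finset.mem_insert, Finset.mem_singleton] at hg
  rcases hg with rfl | rfl | rfl | rfl | rfl | rfl
  · rfl
  · exfalso
    rw [neg_one_mul] at hgx
    have h2 : x + x = 0 := by linear_combination -hgx
    have h3 : ((2 * x.val : ℕ) : ZMod (q^3-1)) = 0 := by
      push_cast
      rw [hxc, two_mul]; exact h2
    exact hzero 2 (cop_N_2 hq hqe) ((ZMod.natCast_eq_zero_iff _ _).mp h3)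
  · exfalso
    have h1 : ((q * x.val : ℕ) : ZMod (q^3-1)) = ((x.val : ℕ) : ZMod (q^3-1)) := by
      push_cast; rw [hxc]; exact hgx
    have h2 := ((ZMod.natCast_eq_natCast_iff _ _ _).mp h1).symm
    have h3 := (Nat.modEq_iff_dvd' (Nat.le_mul_of_pos_left _ (by omega : 0 < q))).mp h2
    have e : q * x.val - x.val = (q-1) * x.val := by rw [tsub_mul, one_mul]
    rw [e] at h3
    have h4 : (q-1)*(q^2+q+1) ∣ (q-1) * x.val := by
      rw [mul_comm (q-1) (q^2+q+1), hMN hq]; exact h3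
    exact hx ((Nat.mul_dvd_mul_iff_left (show 0 < q - 1 by omega)).mp h4)
  · exfalso
    rw [neg_mul] at hgx
    have h2 : (q : ZMod (q^3-1)) * x + x = 0 := by linear_combination -hgx
    have h3 : (((q+1) * x.val : ℕ) : ZMod (q^3-1)) = 0 := by
      push_cast
      rw [hxc, add_mul, one_mul]; exact h2
    exact hzero (q+1) (cop_N_q1 hq hqe) ((ZMod.natCast_eq_zero_iff _ _).mp h3)
  · exfalso
    have h1 : ((q^2 * x.val : ℕ) : ZMod (q^3-1)) = ((x.val : ℕ) : ZMod (q^3-1)) := by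
      push_cast; rw [hxc]; exact hgx
    have h2 := ((ZMod.natCast_eq_natCast_iff _ _ _).mp h1).symm
    have h3 := (Nat.modEq_iff_dvd' (Nat.le_mul_of_pos_left _ (by positivity : 0 < q^2))).mp h2
    have e : q^2 * x.val - x.val = (q-1) * ((q+1) * x.val) := by
      rw [← mul_assoc, hsq (by omega : 1 ≤ q), tsub_mul, one_mul]
    rw [e] at h3
    have h4 : (q-1)*(q^2+q+1) ∣ (q-1) * ((q+1) * x.val) := by
      rw [mul_comm (q-1) (q^2+q+1), hMN hq]; exact h3
    have h5 := (Nat.mul_dvd_mul_iff_left (show 0 < q - 1 by omega)).mp h4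
    exact hx ((cop_M_q1.dvd_mul_left).mp h5)
  · exfalso
    rw [neg_mul] at hgx
    have h2 : (q : ZMod (q^3-1))^2 * x + x = 0 := by linear_combination -hgx
    have h3 : (((q^2+1) * x.val : ℕ) : ZMod (q^3-1)) = 0 := by
      push_cast
      rw [hxc, add_mul, one_mul]; exact h2
    exact hzero (q^2+1) (cop_N_q2 hq hqe) ((ZMod.natCast_eq_zero_iff _ _).mp h3)

lemma hq3_one {q : ℕ} (hq : 2 ≤ q) : (q : ZMod (q^3-1))^3 = 1 := by
  haveI := nzN hq
  have h8 := hN8 hq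
  have h : ((q^3 - 1 : ℕ) : ZMod (q^3-1)) + 1 = ((q^3 : ℕ) : ZMod (q^3-1)) := by
    rw [← Nat.cast_one (R := ZMod (q^3-1)), ← Nat.cast_add]
    congr 1
    omega
  rw [ZMod.natCast_self, zero_add] at h
  rw [h]
  push_cast
  ring

lemma val_facts {q : ℕ} (hq : 2 ≤ q) :
    (1 : ZMod (q^3-1)).val = 1 ∧ (q : ZMod (q^3-1)).val = q ∧
    ((q : ZMod (q^3-1))^2).val = q^2 ∧
    (-1 : ZMod (q^3-1)).val = (q^3-1) - 1 ∧
    (-(q : ZMod (q^3-1))).val = (q^3-1) - q ∧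
    (-((q : ZMod (q^3-1))^2)).val = (q^3-1) - q^2 := by
  haveI := nzN hq
  have h8 := hN8 hq
  have hb := bounds hq
  haveI : Fact (1 < q^3-1) := ⟨by omega⟩
  have hqlt : q < q^3 - 1 := by omega
  have hq2lt : q^2 < q^3 - 1 := by omega
  have e1 : (1 : ZMod (q^3-1)).val = 1 := ZMod.val_one _
  have eQ : (q : ZMod (q^3-1)).val = q := ZMod.val_cast_of_lt hqlt
  have eq2 : ((q : ZMod (q^3-1))^2) = ((q^2 : ℕ) : ZMod (q^3-1)) := by push_cast; ring
  have eQ2 : ((q : ZMod (q^3-1))^2).val = q^2 := by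
    rw [eq2, ZMod.val_cast_of_lt hq2lt]
  have n1 : (1 : ZMod (q^3-1)) ≠ 0 := one_ne_zero
  have nQ : (q : ZMod (q^3-1)) ≠ 0 := by
    intro h; rw [h, ZMod.val_zero] at eQ; omega
  have nQ2 : ((q : ZMod (q^3-1))^2) ≠ 0 := by
    intro h; rw [h, ZMod.val_zero] at eQ2; omega
  refine ⟨e1, eQ, eQ2, ?_, ?_, ?_⟩
  · rw [ZMod.neg_val, if_neg n1, e1]
  · rw [ZMod.neg_val, if_neg nQ, eQ]
  · rw [ZMod.neg_val, if_neg nQ2, eQ2]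

lemma hH_card {q : ℕ} (hq : 2 ≤ q) (hqe : Even q) : (stmt7H q).card = 6 := by
  haveI := nzN hq
  obtain ⟨e1, eQ, eQ2, en1, enQ, enQ2⟩ := val_facts hq
  have h8 := hN8 hq
  have hb := bounds hq
  have hp := parity hq hqe
  have key : ∀ a b : ZMod (q^3-1), a.val ≠ b.val → a ≠ b :=
    fun a b h hab => h (congrArg _ hab)
  show (insert 1 (insert (-1) (insert ((q : ZMod (q^3-1))) (insert (-(q : ZMod (q^3-1)))
      (insert ((q : ZMod (q^3-1))^2) ({-((q : ZMod (q^3-1))^2)} : Finset _))))) ).card = 6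
  rw [Finset.card_insert_of_notMem (by
    simp only [Finset.mem_insert, Finset.mem_singleton, not_or]
    refine ⟨?_, ?_, ?_, ?_, ?_⟩ <;> (apply key; simp only [e1, eQ, eQ2, en1, enQ, enQ2]; omega))]
  rw [Finset.card_insert_of_notMem (by
    simp only [Finset.mem_insert, Finset.mem_singleton, not_or]
    refine ⟨?_, ?_, ?_, ?_⟩ <;> (apply key; simp only [e1, eQ, eQ2, en1, enQ, enQ2]; omega))]
  rw [Finset.card_insert_of_notMem (by
    simp only [Finset.mem_insert, Finset.mem_singleton, not_or]
    refine ⟨?_, ?_, ?_⟩ <;> (apply key; simp only [e1, eQ, eQ2, en1, enQ, enQ2]; omega))]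
  rw [Finset.card_insert_of_notMem (by
    simp only [Finset.mem_insert, Finset.mem_singleton, not_or]
    refine ⟨?_, ?_⟩ <;> (apply key; simp only [e1, eQ, eQ2, en1, enQ, enQ2]; omega))]
  rw [Finset.card_insert_of_notMem (by
    simp only [Finset.mem_singleton]
    apply key; simp only [e1, eQ, eQ2, en1, enQ, enQ2]; omega)]
  rw [Finset.card_singleton]

lemma hH_mul {q : ℕ} (hq : 2 ≤ q) :
    ∀ a ∈ stmt7H q, ∀ b ∈ stmt7H q, a * b ∈ stmt7H q := by
  haveI := nzN hq
  have h3 := hq3_one hq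
  set Q := (q : ZMod (q^3-1)) with hQdef
  have hQQ : Q * Q = Q^2 := (sq Q).symm
  have hQ2Q : Q^2 * Q = 1 := by rw [← pow_succ]; exact h3
  have hQQ2 : Q * Q^2 = 1 := by rw [mul_comm]; exact hQ2Q
  have hQ2Q2 : Q^2 * Q^2 = Q := by
    have e : Q^2 * Q^2 = Q^3 * Q := by ring
    rw [e, h3, one_mul]
  intro a ha b hb
  simp only [stmt7H, Finset.mem_insert, Finset.mem_singleton, ← hQdef] at ha hb ⊢
  rcases ha with rfl|rfl|rfl|rfl|rfl|rfl <;> rcases hb with rfl|rfl|rfl|rfl|rfl|rfl <;>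
    simp only [neg_mul, mul_neg, neg_neg, one_mul, mul_one, hQQ, hQ2Q, hQQ2, hQ2Q2] <;>
    tauto

lemma hH_inv {q : ℕ} (hq : 2 ≤ q) :
    ∀ a ∈ stmt7H q, ∃ a' ∈ stmt7H q, a' * a = 1 := by
  haveI := nzN hq
  have h3 := hq3_one hq
  set Q := (q : ZMod (q^3-1)) with hQdef
  have hQ2Q : Q^2 * Q = 1 := by rw [← pow_succ]; exact h3
  have hQQ2 : Q * Q^2 = 1 := by rw [mul_comm]; exact hQ2Q
  intro a ha
  simp only [stmt7H, Finset.mem_insert, Finset.mem_singleton] at ha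
  rcases ha with rfl|rfl|rfl|rfl|rfl|rfl
  · exact ⟨1, by simp [stmt7H], one_mul 1⟩
  · exact ⟨-1, by simp [stmt7H], by rw [neg_mul_neg, one_mul]⟩
  · exact ⟨Q^2, by simp [stmt7H, hQdef], hQ2Q⟩
  · exact ⟨-(Q^2), by simp [stmt7H, hQdef], by rw [neg_mul_neg]; exact hQ2Q⟩
  · exact ⟨Q, by simp [stmt7H, hQdef], hQQ2⟩
  · exact ⟨-Q, by simp [stmt7H, hQdef], by rw [neg_mul_neg]; exact hQQ2⟩

lemma stab {q : ℕ} (hq : 2 ≤ q) :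
    ∀ h ∈ stmt7H q, ∀ x : ZMod (q^3-1),
      ¬ (q^2+q+1) ∣ x.val → ¬ (q^2+q+1) ∣ (h * x).val := by
  haveI := nzN hq
  intro h hh x hx
  simp only [stmt7H, Finset.mem_insert, Finset.mem_singleton] at hh
  rcases hh with rfl|rfl|rfl|rfl|rfl|rfl
  · rwa [one_mul]
  · rw [neg_one_mul, dvd_neg_iff hq]; exact hx
  · rw [dvd_q_mul_iff hq]; exact hx
  · rw [neg_mul, dvd_neg_iff hq, dvd_q_mul_iff hq]; exact hx
  · have e : (q : ZMod (q^3-1))^2 * x = (q : ZMod (q^3-1)) * ((q : ZMod (q^3-1)) * x) := by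
      ring
    rw [e, dvd_q_mul_iff hq, dvd_q_mul_iff hq]; exact hx
  · have e : -((q : ZMod (q^3-1))^2) * x
        = -((q : ZMod (q^3-1)) * ((q : ZMod (q^3-1)) * x)) := by ring
    rw [e, dvd_neg_iff hq, dvd_q_mul_iff hq, dvd_q_mul_iff hq]; exact hx

lemma orbit_card {q : ℕ} (hq : 2 ≤ q) (hqe : Even q) (x : ZMod (q^3-1))
    (hx : ¬ (q^2+q+1) ∣ x.val) : ((stmt7H q).image (· * x)).card = 6 := by
  haveI := nzN hq
  rw [Finset.card_image_of_injOn, hH_card hq hqe]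
  intro a ha b hb hab
  have hab' : a * x = b * x := hab
  obtain ⟨a', ha', ha'a⟩ := hH_inv hq a ha
  have hg : a' * b ∈ stmt7H q := hH_mul hq a' ha' b hb
  have hgx : (a' * b) * x = x := by
    calc (a'*b)*x = a' * (b*x) := by ring
    _ = a' * (a*x) := by rw [← hab']
    _ = (a'*a)*x := by ring
    _ = x := by rw [ha'a, one_mul]
  have h1 : a' * b = 1 := free_aux hq hqe x hx _ hg hgx
  calc a = 1 * a := (one_mul a).symm
  _ = (a' * b) * a := by rw [h1]
  _ = (a' * a) * b := by ring
  _ = 1 * b := by rw [ha'a]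
  _ = b := one_mul b

lemma S_card {q : ℕ} (hq : 2 ≤ q) : (stmt7S q).ncard = q^3 - q := by
  classical
  haveI := nzN hq
  have h8 := hN8 hq
  have hb := bounds hq
  have hMpos : 0 < q^2+q+1 := by positivity
  have hset : stmt7S q
      = ↑(Finset.univ.filter (fun x : ZMod (q^3-1) => ¬ (q^2+q+1) ∣ x.val)) := by
    ext x; simp [stmt7S]
  rw [hset, Set.ncard_coe_finset]
  have hsplit := Finset.card_filter_add_card_filter_not
    (s := (Finset.univ : Finset (ZMod (q^3-1))))
    (p := fun x : ZMod (q^3-1) => (q^2+q+1) ∣ x.val)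
  have huniv : (Finset.univ : Finset (ZMod (q^3-1))).card = q^3-1 := by
    rw [Finset.card_univ, ZMod.card]
  have himg : Finset.univ.filter (fun x : ZMod (q^3-1) => (q^2+q+1) ∣ x.val)
      = (Finset.range (q-1)).image (fun k => ((k * (q^2+q+1) : ℕ) : ZMod (q^3-1))) := by
    ext x
    simp only [Finset.mem_filter, Finset.mem_univ, true_and, Finset.mem_image,
      Finset.mem_range]
    constructor
    · rintro ⟨c, hc⟩
      refine ⟨c, ?_, ?_⟩
      · have hlt : (q^2+q+1) * c < (q^2+q+1) * (q-1) := by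
          rw [hMN hq, ← hc]; exact ZMod.val_lt x
        exact lt_of_mul_lt_mul_left hlt (Nat.zero_le _)
      · rw [mul_comm, ← hc, ZMod.natCast_zmod_val]
    · rintro ⟨k, hk, rfl⟩
      have hlt : k * (q^2+q+1) < q^3-1 := by
        rw [← hMN hq, mul_comm]
        exact mul_lt_mul_of_pos_left hk hMpos
      rw [ZMod.val_cast_of_lt hlt]
      exact dvd_mul_left _ _
  have hinj : Set.InjOn (fun k => ((k * (q^2+q+1) : ℕ) : ZMod (q^3-1)))
      ↑(Finset.range (q-1)) := by
    intro a ha b hb hab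
    simp only [Finset.coe_range, Set.mem_Iio] at ha hb
    have la : a * (q^2+q+1) < q^3-1 := by
      rw [← hMN hq, mul_comm]; exact mul_lt_mul_of_pos_left ha hMpos
    have lb : b * (q^2+q+1) < q^3-1 := by
      rw [← hMN hq, mul_comm]; exact mul_lt_mul_of_pos_left hb hMpos
    have hv := congrArg ZMod.val hab
    rw [ZMod.val_cast_of_lt la, ZMod.val_cast_of_lt lb] at hv
    exact Nat.eq_of_mul_eq_mul_right hMpos hv
  rw [himg, Finset.card_image_of_injOn hinj, Finset.card_range, huniv] at hsplit
  omega

end Stmt7Aux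

open Stmt7Aux in
theorem stmt_7 (q : ℕ) (hq : 2 ≤ q) (hqe : Even q) :
    (stmt7S q).ncard = q ^ 3 - q ∧
    (∀ x ∈ stmt7S q, -x ∈ stmt7S q ∧ (q : ZMod (q ^ 3 - 1)) * x ∈ stmt7S q) ∧
    (stmt7H q).card = 6 ∧
    (∀ a ∈ stmt7H q, ∀ b ∈ stmt7H q, a * b ∈ stmt7H q) ∧
    (∀ x ∈ stmt7S q, ((stmt7H q).image (· * x)).card = 6) ∧
    {A : Finset (ZMod (q ^ 3 - 1)) |
        ∃ x ∈ stmt7S q, A = (stmt7H q).image (· * x)}.ncard = q * (q ^ 2 - 1) / 6 := by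
  classical
  haveI := nzN hq
  have h8 := hN8 hq
  have hb := bounds hq
  refine ⟨S_card hq, ?_, hH_card hq hqe, hH_mul hq, ?_, ?_⟩
  · intro x hx
    simp only [stmt7S, Set.mem_setOf_eq] at hx ⊢
    exact ⟨fun hd => hx ((dvd_neg_iff hq x).mp hd),
      fun hd => hx ((dvd_q_mul_iff hq x).mp hd)⟩
  · intro x hx
    simp only [stmt7S, Set.mem_setOf_eq] at hx
    exact orbit_card hq hqe x hx
  · -- orbit counting
    set T : Finset (ZMod (q^3-1)) :=
      Finset.univ.filter (fun x : ZMod (q^3-1) => ¬ (q^2+q+1) ∣ x.val) with hT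
    have hTmem : ∀ y : ZMod (q^3-1), y ∈ T ↔ ¬ (q^2+q+1) ∣ y.val := by
      intro y; simp [hT]
    have hTcard : T.card = q^3 - q := by
      have h := S_card hq
      have hset : stmt7S q = ↑T := by ext y; simp [stmt7S, hT]
      rwa [hset, Set.ncard_coe_finset] at h
    have horbset : {A : Finset (ZMod (q ^ 3 - 1)) |
        ∃ x ∈ stmt7S q, A = (stmt7H q).image (· * x)}
        = ↑(T.image (fun x => (stmt7H q).image (· * x))) := by
      ext A
      simp only [Set.mem_setOf_eq, Finset.coe_image, Set.mem_image, Finset.mem_coe,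
        stmt7S]
      constructor
      · rintro ⟨x, hx, rfl⟩; exact ⟨x, (hTmem x).mpr hx, rfl⟩
      · rintro ⟨x, hx, rfl⟩; exact ⟨x, (hTmem x).mp hx, rfl⟩
    rw [horbset, Set.ncard_coe_finset]
    have fib : ∀ x ∈ T,
        T.filter (fun y => (stmt7H q).image (· * y) = (stmt7H q).image (· * x))
          = (stmt7H q).image (· * x) := by
      intro x hxT
      have hx : ¬ (q^2+q+1) ∣ x.val := (hTmem x).mp hxT
      ext y
      simp only [Finset.mem_filter, hTmem]
      constructor
      · rintro ⟨hyT, hFy⟩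
        rw [← hFy]
        exact Finset.mem_image.mpr ⟨1, by simp [stmt7H], one_mul y⟩
      · intro hyF
        obtain ⟨h, hh, rfl⟩ := Finset.mem_image.mp hyF
        refine ⟨stab hq h hh x hx, ?_⟩
        obtain ⟨h', hh', hh'h⟩ := hH_inv hq h hh
        apply Finset.Subset.antisymm
        · intro z hz
          obtain ⟨g, hg, rfl⟩ := Finset.mem_image.mp hz
          exact Finset.mem_image.mpr ⟨g*h, hH_mul hq g hg h hh, by ring⟩
        · intro z hz
          obtain ⟨g, hg, rfl⟩ := Finset.mem_image.mp hz
          refine Finset.mem_image.mpr ⟨g*h', hH_mul hq g hg h' hh', ?_⟩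
          show (g*h') * (h*x) = g * x
          calc (g*h')*(h*x) = g * ((h'*h)*x) := by ring
          _ = g * x := by rw [hh'h, one_mul]
    have hsum := Finset.card_eq_sum_card_image
      (fun x : ZMod (q^3-1) => (stmt7H q).image (· * x)) T
    have hconst : ∀ A ∈ T.image (fun x => (stmt7H q).image (· * x)),
        (T.filter (fun y => (stmt7H q).image (· * y) = A)).card = 6 := by
      intro A hA
      obtain ⟨x, hxT, rfl⟩ := Finset.mem_image.mp hA
      rw [fib x hxT]
      exact orbit_card hq hqe x ((hTmem x).mp hxT)
    rw [Finset.sum_congr rfl hconst, Finset.sum_const, smul_eq_mul] at hsum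
    have e : q * (q^2 - 1) = q^3 - q := by
      obtain ⟨m, hm⟩ : ∃ m, q^2 = m + 1 := ⟨q^2-1, by omega⟩
      have h3 : q^3 = q*m + q := by
        rw [show q^3 = q * q^2 by ring, hm]; ring
      rw [hm, Nat.add_sub_cancel, h3]
      omega
    rw [e]
    omega
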